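/- For every natural number n, 1 = Σ_{k=0}^{n} μ(2k+1) · ⌊(n+k+1)/(2k+1)⌋, where μ is the Möbius function. -/

import Mathlib

open ArithmeticFunction Finset
open scoped ArithmeticFunction.Moebius ArithmeticFunction.zeta

lemma sum_mu_divisors (m : ℕ) :
    ∑ d ∈ m.divisors, (μ d : ℤ) = if m = 1 then 1 else 0 := by
  have h : (μ * ζ : ArithmeticFunction ℤ) m = (1 : ArithmeticFunction ℤ) m := by
    rw [moebius_mul_coe_zeta]
  rwa [coe_mul_zeta_apply, one_apply] at h

lemma count_eq (n k : ℕ) :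
    ((n + k + 1) / (2 * k + 1) : ℕ)
      = ((Finset.range (n+1)).filter (fun j => (2*k+1) ∣ (2*j+1))).card := by
  have himg : ((Finset.range (n+1)).filter (fun j => (2*k+1) ∣ (2*j+1)))
      = (Finset.range ((n + k + 1)/(2*k+1))).image (fun m => (2*k+1)*m + k) := by
    ext j
    simp only [mem_filter, mem_range, mem_image]
    constructor
    · rintro ⟨hj, t, ht⟩
      have hodd : Odd t := by
        have h1 : Odd ((2*k+1) * t) := ht ▸ ⟨j, by ring⟩
        exact (Nat.odd_mul.mp h1).2
      obtain ⟨m, rfl⟩ := hodd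
      have hr : (2*k+1)*(2*m+1) = 2*((2*k+1)*m) + 2*k+1 := by ring
      refine ⟨m, ?_, by omega⟩
      have hle : (m+1) ≤ (n + k + 1)/(2*k+1) := by
        rw [Nat.le_div_iff_mul_le (by omega : 0 < 2*k+1)]
        have hr2 : (m+1)*(2*k+1) = (2*k+1)*m + (2*k+1) := by ring
        omega
      omega
    · rintro ⟨m, hm, hj⟩
      have hle : (m+1)*(2*k+1) ≤ n + k + 1 := by
        rw [← Nat.le_div_iff_mul_le (by omega : 0 < 2*k+1)]
        omega
      have hr2 : (m+1)*(2*k+1) = (2*k+1)*m + (2*k+1) := by ring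
      refine ⟨by omega, 2*m+1, ?_⟩
      subst hj; ring
  rw [himg, Finset.card_image_of_injective _ ?_, Finset.card_range]
  intro a b h
  have h' : (2*k+1)*a + k = (2*k+1)*b + k := h
  have h2 : (2*k+1)*a = (2*k+1)*b := by omega
  exact Nat.eq_of_mul_eq_mul_left (by omega) h2

lemma divisors_odd (n j : ℕ) (hj : j ≤ n) :
    (2*j+1).divisors = ((Finset.range (n+1)).filter
      (fun k => (2*k+1) ∣ (2*j+1))).image (fun k => 2*k+1) := by
  ext d
  simp only [Nat.mem_divisors, mem_image, mem_filter, mem_range]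
  constructor
  · rintro ⟨hd, -⟩
    have hodd : Odd d := by
      obtain ⟨c, hc⟩ := hd
      rcases Nat.even_or_odd d with ⟨u, hu⟩ | h
      · exfalso
        have : d * c = 2*(u*c) := by rw [hu]; ring
        omega
      · exact h
    obtain ⟨k', rfl⟩ := hodd
    have hle : 2*k'+1 ≤ 2*j+1 := Nat.le_of_dvd (by omega) hd
    exact ⟨k', ⟨by omega, hd⟩, rfl⟩
  · rintro ⟨k', ⟨-, hd⟩, rfl⟩
    exact ⟨hd, by omega⟩

open ArithmeticFunction ArithmeticFunction.Moebius in
theorem stmt_12 (n : ℕ) :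
    (1 : ℤ) = ∑ k ∈ Finset.range (n + 1),
      (μ (2 * k + 1)) * (((n + k + 1) / (2 * k + 1) : ℕ) : ℤ) := by
  have h1 : ∀ k ∈ Finset.range (n+1),
      (μ (2 * k + 1) : ℤ) * (((n + k + 1) / (2 * k + 1) : ℕ) : ℤ)
      = ∑ j ∈ Finset.range (n+1),
          if (2*k+1) ∣ (2*j+1) then (μ (2 * k + 1) : ℤ) else 0 := by
    intro k _
    rw [count_eq n k, ← Finset.sum_filter, Finset.sum_const, nsmul_eq_mul, mul_comm]
  rw [Finset.sum_congr rfl h1, Finset.sum_comm]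
  have h2 : ∀ j ∈ Finset.range (n+1),
      (∑ k ∈ Finset.range (n+1),
        if (2*k+1) ∣ (2*j+1) then (μ (2 * k + 1) : ℤ) else 0)
      = if j = 0 then 1 else 0 := by
    intro j hj
    rw [← Finset.sum_filter]
    have key := sum_mu_divisors (2*j+1)
    rw [divisors_odd n j (Nat.lt_succ_iff.mp (mem_range.mp hj)),
      Finset.sum_image (fun a _ b _ h => by
        have h' : 2*a+1 = 2*b+1 := h; omega)] at key
    rw [key]
    congr 1
    simp only [eq_iff_iff]
    omega
  rw [Finset.sum_congr rfl h2]
  simp
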